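/- arXiv:2211.02407 — 3 statements merged into one kernel-verified Lean document; each statement's English description precedes it below -/
import Mathlib

section
/- Cycle lemma (Dvoretzky–Motzkin): Let k_1, ..., k_n be integers each ≥ -1 with k_1 + ... + k_n = -1. Then there is exactly one cyclic shift σ of {1, ..., n} such that the partial sums of (k_{σ(1)}, ..., k_{σ(n)}) satisfy S_i ≥ 0 for all 1 ≤ i ≤ n-1 and S_n = -1. -/
/-- Cycle lemma (Dvoretzky–Motzkin).  Let `k_1, …, k_n` be integers,
each `≥ -1`, with `k_1 + ⋯ + k_n = -1`.  There is exactly one cyclic shift `r`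
such that the partial sums of the rotated sequence satisfy `S_i ≥ 0` for all
`1 ≤ i ≤ n-1` and `S_n = -1`. -/
theorem cycle_lemma (n : ℕ) (hn : 0 < n) (k : ℕ → ℤ)
    (hk : ∀ i < n, -1 ≤ k i)
    (hsum : ∑ i ∈ Finset.range n, k i = -1) :
    ∃! r : Fin n,
      (∀ i : ℕ, 1 ≤ i → i ≤ n - 1 →
        0 ≤ ∑ j ∈ Finset.range i, k ((j + r.val) % n)) ∧
      ∑ j ∈ Finset.range n, k ((j + r.val) % n) = -1 := by
  classical
  -- rotated full sums are all -1
  have key : ∀ c : ℕ, ∑ j ∈ Finset.range n, k ((j + c) % n) = -1 := by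
    intro c
    rw [← hsum]
    have hm := Nat.div_add_mod c n
    have hd : c % n < n := Nat.mod_lt _ hn
    refine Finset.sum_nbij' (i := fun j => (j + c) % n)
      (j := fun a => (a + (n - c % n)) % n) ?_ ?_ ?_ ?_ ?_
    · intro a _; exact Finset.mem_range.2 (Nat.mod_lt _ hn)
    · intro a _; exact Finset.mem_range.2 (Nat.mod_lt _ hn)
    · intro a ha
      simp only [Finset.mem_range] at ha
      show ((a + c) % n + (n - c % n)) % n = a
      rw [Nat.mod_add_mod]
      have e : a + c + (n - c % n) = a + n + n * (c / n) := by omega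
      rw [e, Nat.add_mul_mod_self_left, Nat.add_mod_right, Nat.mod_eq_of_lt ha]
    · intro a ha
      simp only [Finset.mem_range] at ha
      show ((a + (n - c % n)) % n + c) % n = a
      rw [Nat.mod_add_mod]
      have e : a + (n - c % n) + c = a + n + n * (c / n) := by omega
      rw [e, Nat.add_mul_mod_self_left, Nat.add_mod_right, Nat.mod_eq_of_lt ha]
    · intro a _; rfl
  -- extended partial sums
  set T : ℕ → ℤ := fun m => ∑ j ∈ Finset.range m, k (j % n) with hTdef
  have hadd : ∀ a b : ℕ, T (a + b) = T a + ∑ j ∈ Finset.range b, k ((j + a) % n) := by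
    intro a b
    simp only [hTdef]
    rw [Finset.sum_range_add]
    congr 1
    refine Finset.sum_congr rfl fun j _ => ?_
    rw [Nat.add_comm]
  have hshift : ∀ m : ℕ, T (m + n) = T m - 1 := by
    intro m; rw [hadd m n, key m]; ring
  -- reformulate the condition
  have hcond : ∀ r : Fin n,
      ((∀ i : ℕ, 1 ≤ i → i ≤ n - 1 →
        0 ≤ ∑ j ∈ Finset.range i, k ((j + r.val) % n)) ∧
      ∑ j ∈ Finset.range n, k ((j + r.val) % n) = -1) ↔
      (∀ i : ℕ, 1 ≤ i → i ≤ n - 1 → T r.val ≤ T (r.val + i)) := by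
    intro r
    constructor
    · rintro ⟨h1, _⟩ i hi1 hi2
      have := h1 i hi1 hi2
      have h2 := hadd r.val i
      linarith
    · intro h
      refine ⟨fun i hi1 hi2 => ?_, key r.val⟩
      have := h i hi1 hi2
      have h2 := hadd r.val i
      linarith
  -- smallest minimizer of T on [0, n)
  have hex : ∃ m, m < n ∧ ∀ j < n, T m ≤ T j := by
    obtain ⟨m, hm, hmin⟩ := Finset.exists_min_image (Finset.range n) T
      ⟨0, Finset.mem_range.2 hn⟩
    exact ⟨m, Finset.mem_range.1 hm, fun j hj => hmin j (Finset.mem_range.2 hj)⟩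
  set r := Nat.find hex with hrdef
  obtain ⟨hrn, hrmin⟩ := Nat.find_spec hex
  have hstrict : ∀ m, m < r → T r < T m := by
    intro m hm
    have hmn : m < n := lt_trans hm hrn
    have hnm := Nat.find_min hex hm
    push_neg at hnm
    obtain ⟨j, hj, hjlt⟩ := hnm hmn
    exact lt_of_le_of_lt (hrmin j hj) hjlt
  have hTr : ∀ i : ℕ, 1 ≤ i → i ≤ n - 1 → T r ≤ T (r + i) := by
    intro i hi1 hi2
    by_cases hc : r + i < n
    · exact hrmin _ hc
    · have hm : r + i = (r + i - n) + n := by omega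
      rw [hm, hshift]
      have hlt : r + i - n < r := by omega
      have := hstrict _ hlt
      omega
  -- any two satisfiers coincide
  have absurd2 : ∀ a b : ℕ, a < b → b < n →
      (∀ i : ℕ, 1 ≤ i → i ≤ n - 1 → T a ≤ T (a + i)) →
      (∀ i : ℕ, 1 ≤ i → i ≤ n - 1 → T b ≤ T (b + i)) → False := by
    intro a b hab hbn ha hb
    have h1 : T a ≤ T b := by
      have := ha (b - a) (by omega) (by omega)
      rwa [show a + (b - a) = b by omega] at this
    have h2 := hb (a + n - b) (by omega) (by omega)
    rw [show b + (a + n - b) = a + n by omega, hshift] at h2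
    linarith
  refine ⟨⟨r, hrn⟩, (hcond ⟨r, hrn⟩).2 hTr, ?_⟩
  intro y hy
  have hy' := (hcond y).1 hy
  have hyn := y.isLt
  apply Fin.ext
  rcases lt_trichotomy y.val r with h | h | h
  · exact absurd (absurd2 y.val r h hrn hy' hTr) not_false
  · exact h
  · exact absurd (absurd2 r y.val h hyn hTr hy') not_false
end

section
/- Kemperman's formula: Let ξ_1, ..., ξ_n be i.i.d. integer-valued random variables with ξ_i ≥ -1 almost surely, and S_i = ξ_1 + ... + ξ_i. Then P(S_i ≥ 0 for all 1 ≤ i ≤ n-1 and S_n = -1) = (1/n)·P(S_n = -1). -/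
open MeasureTheory ProbabilityTheory

namespace KempermanAux

open Fin.NatCast

variable {n : ℕ} [NeZero n]

/-- Partial sums of the periodic extension of `x : Fin n → ℤ`. -/
def ps (x : Fin n → ℤ) (m : ℕ) : ℤ := ∑ j ∈ Finset.range m, x j

/-- The "good" set of step vectors. -/
def GoodSet (n : ℕ) [NeZero n] : Set (Fin n → ℤ) :=
  {x | (∀ i : ℕ, 1 ≤ i → i ≤ n - 1 → 0 ≤ ps x i) ∧ ps x n = -1}

/-- Cyclic rotation. -/
def rot (k : Fin n) (x : Fin n → ℤ) : Fin n → ℤ := fun i => x (i + k)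

lemma ps_total (x : Fin n → ℤ) : ps x n = ∑ i, x i := by
  rw [ps, ← Fin.sum_univ_eq_sum_range (fun j => x (j : Fin n)) n]
  simp [Fin.cast_val_eq_self]

lemma ps_add (x : Fin n → ℤ) (a b : ℕ) :
    ps x (a + b) = ps x a + ∑ j ∈ Finset.range b, x ((a : Fin n) + (j : Fin n)) := by
  rw [ps, Finset.sum_range_add]
  congr 1
  exact Finset.sum_congr rfl fun j _ => by push_cast; ring_nf

lemma ps_add_n (x : Fin n → ℤ) (a : ℕ) : ps x (a + n) = ps x a + ps x n := by
  rw [ps_add, ps_total]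
  congr 1
  rw [← Fin.sum_univ_eq_sum_range (fun j => x ((a : Fin n) + (j : Fin n))) n]
  simp only [Fin.cast_val_eq_self]
  exact Equiv.sum_comp (Equiv.addLeft (a : Fin n)) x

lemma ps_rot (k : Fin n) (x : Fin n → ℤ) (m : ℕ) :
    ps (rot k x) m = ps x (k.val + m) - ps x k.val := by
  rw [ps_add, Fin.cast_val_eq_self]
  have : ∀ j : ℕ, x (k + (j : Fin n)) = rot k x (j : Fin n) := fun j => by
    simp [rot, add_comm]
  simp only [this]
  rw [ps]; ring

lemma good_iff (x : Fin n → ℤ) (hsum : ∑ i, x i = -1) (k : Fin n) :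
    rot k x ∈ GoodSet n ↔
      ∀ m : ℕ, m < n → (ps x k.val ≤ ps x m ∧ (m < k.val → ps x k.val < ps x m)) := by
  have hn : 0 < n := Nat.pos_of_ne_zero (NeZero.ne n)
  have hpsn : ps x n = -1 := by rw [ps_total]; exact hsum
  constructor
  · rintro ⟨h1, -⟩ m hm
    have hstrict : m < k.val → ps x k.val < ps x m := by
      intro hmk
      have hkn : k.val < n := k.isLt
      have hi1 : 1 ≤ m + n - k.val := by omega
      have hi2 : m + n - k.val ≤ n - 1 := by omega
      have := h1 _ hi1 hi2
      rw [ps_rot] at this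
      have hEq : k.val + (m + n - k.val) = m + n := by omega
      rw [hEq, ps_add_n, hpsn] at this
      omega
    refine ⟨?_, hstrict⟩
    rcases lt_or_ge m k.val with hmk | hkm
    · exact le_of_lt (hstrict hmk)
    · rcases eq_or_lt_of_le hkm with rfl | hlt
      · exact le_refl _
      · have hi1 : 1 ≤ m - k.val := by omega
        have hi2 : m - k.val ≤ n - 1 := by omega
        have := h1 _ hi1 hi2
        rw [ps_rot] at this
        have hEq : k.val + (m - k.val) = m := by omega
        rw [hEq] at this
        omega
  · intro C
    constructor
    · intro i hi1 hi2
      rw [ps_rot]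
      rcases lt_or_ge (k.val + i) n with hlt | hge
      · have := (C _ hlt).1
        omega
      · have hkn : k.val < n := k.isLt
        have hmn : k.val + i - n < n := by omega
        have hmk : k.val + i - n < k.val := by omega
        have := (C _ hmn).2 hmk
        have hEq : k.val + i = (k.val + i - n) + n := by omega
        rw [hEq, ps_add_n, hpsn]
        omega
    · show ps (rot k x) n = -1
      rw [ps_rot, ps_add_n, hpsn]
      ring

lemma existsUnique_good (x : Fin n → ℤ) (hsum : ∑ i, x i = -1) :
    ∃! k : Fin n, rot k x ∈ GoodSet n := by
  classical
  have hn : 0 < n := Nat.pos_of_ne_zero (NeZero.ne n)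
  obtain ⟨b, hb, hbmin⟩ :=
    Finset.exists_min_image (Finset.range n) (ps x) ⟨0, Finset.mem_range.2 hn⟩
  have hex : ∃ m, ps x m ≤ ps x b := ⟨b, le_refl _⟩
  set k0 := Nat.find hex with hk0def
  have hk0le : ps x k0 ≤ ps x b := Nat.find_spec hex
  have hk0b : k0 ≤ b := Nat.find_min' hex (le_refl _)
  have hk0n : k0 < n := lt_of_le_of_lt hk0b (Finset.mem_range.1 hb)
  have good0 : ∀ m : ℕ, m < n → (ps x k0 ≤ ps x m ∧ (m < k0 → ps x k0 < ps x m)) := by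
    intro m hm
    refine ⟨le_trans hk0le (hbmin m (Finset.mem_range.2 hm)), fun hmk => ?_⟩
    have := Nat.find_min hex hmk
    have h2 : ps x b < ps x m := lt_of_not_ge this
    exact lt_of_le_of_lt hk0le h2
  refine ⟨⟨k0, hk0n⟩, (good_iff x hsum _).2 good0, ?_⟩
  intro k' hk'
  have C' := (good_iff x hsum k').1 hk'
  rcases lt_trichotomy k'.val k0 with h | h | h
  · have h1 := (good0 k'.val k'.isLt).2 h
    have h2 := (C' k0 hk0n).1
    omega
  · exact Fin.ext h
  · have h1 := (C' k0 hk0n).2 h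
    have h2 := (good0 k'.val k'.isLt).1
    omega


end KempermanAux

open KempermanAux Fin.NatCast in
/-- Kemperman's formula (hitting time theorem).  For i.i.d.
integer-valued steps `ξ_i ≥ -1` a.s. and `S_i = ξ_1 + ⋯ + ξ_i`,
`P(S_i ≥ 0 for all 1 ≤ i ≤ n-1 and S_n = -1) = (1/n) P(S_n = -1)`. -/
theorem kemperman_formula {Ω : Type*} [MeasurableSpace Ω] (P : Measure Ω)
    [IsProbabilityMeasure P]
    (n : ℕ) (hn : 1 ≤ n)
    (ξ : ℕ → Ω → ℤ) (hmeas : ∀ i, Measurable (ξ i))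
    (hindep : iIndepFun ξ P)
    (hident : ∀ i, Measure.map (ξ i) P = Measure.map (ξ 0) P)
    (hlb : ∀ i, ∀ᵐ ω ∂P, -1 ≤ ξ i ω)
    (S : ℕ → Ω → ℤ) (hS : ∀ i ω, S i ω = ∑ j ∈ Finset.range i, ξ j ω) :
    P {ω | (∀ i : ℕ, 1 ≤ i → i ≤ n - 1 → 0 ≤ S i ω) ∧ S n ω = -1}
      = (n : ENNReal)⁻¹ * P {ω | S n ω = -1} := by
  classical
  haveI : NeZero n := ⟨by omega⟩
  set μ : Measure ℤ := P.map (ξ 0) with hμ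
  haveI : IsProbabilityMeasure μ := Measure.isProbabilityMeasure_map (hmeas 0).aemeasurable
  set ν : Measure (Fin n → ℤ) := Measure.pi (fun _ => μ) with hν
  haveI : IsProbabilityMeasure ν := by rw [hν]; infer_instance
  set V : Ω → (Fin n → ℤ) := fun ω i => ξ i ω with hVdef
  have hV : Measurable V := measurable_pi_lambda _ (fun i => hmeas i)
  have hmeasAll : ∀ s : Set (Fin n → ℤ), MeasurableSet s :=
    fun s => (Set.to_countable s).measurableSet
  have hmeasZ : ∀ s : Set ℤ, MeasurableSet s :=
    fun s => (Set.to_countable s).measurableSet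
  -- the joint law of `(ξ_0, …, ξ_{n-1})` is the product measure
  have hlaw : P.map V = ν := by
    rw [hν]
    refine (Measure.pi_eq fun s _ => ?_).symm
    set t : ℕ → Set ℤ := fun j => if h : j < n then s ⟨j, h⟩ else Set.univ with ht
    have hpre : V ⁻¹' Set.univ.pi s = ⋂ j ∈ Finset.range n, ξ j ⁻¹' t j := by
      ext ω
      simp only [Set.mem_preimage, Set.mem_univ_pi, Set.mem_iInter, Finset.mem_range]
      constructor
      · intro h j hj
        simpa [ht, hj] using h ⟨j, hj⟩
      · intro h i
        have := h i.val i.isLt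
        simpa [ht, i.isLt] using this
    calc (P.map V) (Set.univ.pi s)
        = P (V ⁻¹' Set.univ.pi s) := Measure.map_apply hV (hmeasAll _)
      _ = P (⋂ j ∈ Finset.range n, ξ j ⁻¹' t j) := by rw [hpre]
      _ = ∏ j ∈ Finset.range n, P (ξ j ⁻¹' t j) :=
          hindep.measure_inter_preimage_eq_mul _ (fun j _ => hmeasZ _)
      _ = ∏ j ∈ Finset.range n, μ (t j) := by
          refine Finset.prod_congr rfl fun j _ => ?_
          rw [← hident j, Measure.map_apply (hmeas j) (hmeasZ _)]
      _ = ∏ i : Fin n, μ (t i.val) := (Fin.prod_univ_eq_prod_range _ n).symm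
      _ = ∏ i : Fin n, μ (s i) := by
          refine Finset.prod_congr rfl fun i _ => ?_
          have : t i.val = s i := by simp [ht, i.isLt]
          rw [this]
  -- partial sums of `V ω` agree with `S`
  have hps_eq : ∀ (ω : Ω) (i : ℕ), i ≤ n → ps (V ω) i = S i ω := by
    intro ω i hi
    rw [hS, ps]
    refine Finset.sum_congr rfl fun j hj => ?_
    have hj' : j < n := lt_of_lt_of_le (Finset.mem_range.1 hj) hi
    show ξ (((j : ℕ) : Fin n) : ℕ) ω = ξ j ω
    rw [Fin.val_cast_of_lt hj']
  -- event identifications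
  have hE1 : {ω | (∀ i : ℕ, 1 ≤ i → i ≤ n - 1 → 0 ≤ S i ω) ∧ S n ω = -1}
      = V ⁻¹' GoodSet n := by
    ext ω
    simp only [Set.mem_setOf_eq, Set.mem_preimage, GoodSet]
    constructor
    · rintro ⟨h1, h2⟩
      refine ⟨fun i hi1 hi2 => ?_, ?_⟩
      · rw [hps_eq ω i (by omega)]; exact h1 i hi1 hi2
      · rw [hps_eq ω n le_rfl]; exact h2
    · rintro ⟨h1, h2⟩
      refine ⟨fun i hi1 hi2 => ?_, ?_⟩
      · rw [← hps_eq ω i (by omega)]; exact h1 i hi1 hi2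
      · rw [← hps_eq ω n le_rfl]; exact h2
  have hE2 : {ω | S n ω = -1} = V ⁻¹' {x : Fin n → ℤ | ps x n = -1} := by
    ext ω
    simp only [Set.mem_setOf_eq, Set.mem_preimage]
    rw [hps_eq ω n le_rfl]
  -- rotation invariance of the product measure
  have hrot : ∀ k : Fin n, ν (rot k ⁻¹' GoodSet n) = ν (GoodSet n) := by
    intro k
    have hmp := measurePreserving_piCongrLeft (fun _ : Fin n => μ) ((Equiv.addRight k).symm)
    set g := MeasurableEquiv.piCongrLeft (fun _ : Fin n => ℤ) ((Equiv.addRight k).symm) with hg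
    have hgfun : ⇑g = rot (n := n) k := by
      funext x i
      have h0 := MeasurableEquiv.piCongrLeft_apply_apply (β := fun _ : Fin n => ℤ)
        ((Equiv.addRight k).symm) x ((Equiv.addRight k) i)
      rw [Equiv.symm_apply_apply] at h0
      exact h0
    have := hmp.measure_preimage (s := GoodSet n) (hmeasAll _).nullMeasurableSet
    rw [hgfun] at this
    exact this
  -- decomposition of the event `{ps · n = -1}` into rotations of the good set
  have hcover : {x : Fin n → ℤ | ps x n = -1} = ⋃ k : Fin n, rot k ⁻¹' GoodSet n := by
    ext x
    simp only [Set.mem_setOf_eq, Set.mem_iUnion, Set.mem_preimage]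
    constructor
    · intro hx
      have hsum : ∑ i, x i = -1 := by rw [← ps_total]; exact hx
      obtain ⟨k, hk, -⟩ := existsUnique_good x hsum
      exact ⟨k, hk⟩
    · rintro ⟨k, hk⟩
      have h2 := hk.2
      rw [ps_rot, ps_add_n] at h2
      omega
  have hdisj : Pairwise (Function.onFun Disjoint
      fun k : Fin n => rot k ⁻¹' GoodSet n) := by
    intro k k' hne
    simp only [Function.onFun]
    rw [Set.disjoint_left]
    intro x hx hx'
    have h2 := hx.2
    rw [ps_rot, ps_add_n, ps_total] at h2
    have hsum : ∑ i, x i = -1 := by omega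
    obtain ⟨k0, -, huniq⟩ := existsUnique_good x hsum
    exact hne ((huniq k hx).trans (huniq k' hx').symm)
  have hcount : ν {x : Fin n → ℤ | ps x n = -1} = n * ν (GoodSet n) := by
    rw [hcover, measure_iUnion hdisj (fun k => hmeasAll _), tsum_fintype]
    simp only [hrot, Finset.sum_const, Finset.card_univ, Fintype.card_fin, nsmul_eq_mul,
      Nat.cast_id]
  -- put everything together
  have hP1 : P {ω | (∀ i : ℕ, 1 ≤ i → i ≤ n - 1 → 0 ≤ S i ω) ∧ S n ω = -1}
      = ν (GoodSet n) := by
    rw [hE1, ← Measure.map_apply hV (hmeasAll _), hlaw]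
  have hP2 : P {ω | S n ω = -1} = ν {x : Fin n → ℤ | ps x n = -1} := by
    rw [hE2, ← Measure.map_apply hV (hmeasAll _), hlaw]
  rw [hP1, hP2, hcount, ← mul_assoc, ENNReal.inv_mul_cancel, one_mul]
  · exact Nat.cast_ne_zero.2 (by omega)
  · exact ENNReal.natCast_ne_top n
end

section
/- Change of measure for mutation counts in a continuous-time Markov chain: consider a continuous-time Markov chain X on ℕ absorbed at 0, with transition rates from i: up-rate i (to i+1), mutation down-rate μ·i (to i-1), and plain down-rate (α + (i-1)β)·i (to i-1), started at 1, and let M be the number of mutation transitions and L = ∫_0^∞ X_t dt. Then for every s > 0 and every nonnegative measurable functional f of the trajectory, E_μ[f(X)·s^M] = E_{sμ}[f(X)·e^{(s-1)μL}], where E_μ and E_{sμ} denote expectation under mutation rates μ and sμ respectively (other rates unchanged). -/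
open MeasureTheory

/-- Transition rate of the logistic branching process with mutation rate `μ`
from state `i` to state `j`, for a transition marked (`mark = true`: mutation)
or unmarked: up-rate `i` to `i+1`, mutation down-rate `μ·i` to `i-1`, plain
down-rate `(α + (i-1)β)·i` to `i-1`. -/
noncomputable def jumpRate (α β μ : ℝ) (i j : ℕ) (mark : Bool) : ℝ :=
  if mark then (if j + 1 = i then μ * i else 0)
  else if j = i + 1 then (i : ℝ)
  else if j + 1 = i then (α + ((i : ℝ) - 1) * β) * (i : ℝ)
  else 0

/-- Total jump rate out of state `i`: `q_i = (1 + ρ_i) i` with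
`ρ_i = α + μ + (i-1)β`. -/
noncomputable def totalRate (α β μ : ℝ) (i : ℕ) : ℝ :=
  (1 + (α + μ + ((i : ℝ) - 1) * β)) * (i : ℝ)

/-- Expectation of a functional of the marked chain: trajectories with `n`
jumps are encoded by the visited states `x : Fin (n+1) → ℕ` (started at `1`,
absorbed at `0`), the marks `b : Fin n → Bool` and the holding times
`t : Fin n → ℝ`; the density of a trajectory is the product of its transition
rates and of `exp(-q_{x_k} t_k)` over the holding times. -/
noncomputable def pathExpectation (α β μ : ℝ)
    (g : (n : ℕ) → (Fin (n + 1) → ℕ) → (Fin n → Bool) → (Fin n → ℝ) → ℝ) : ℝ :=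
  ∑' n : ℕ, ∑' x : Fin (n + 1) → ℕ, ∑' b : Fin n → Bool,
    ∫ t in Set.univ.pi (fun _ : Fin n => Set.Ici (0 : ℝ)),
      (if x 0 = 1 ∧ x (Fin.last n) = 0 then (1 : ℝ) else 0) *
        g n x b t *
        ∏ i : Fin n,
          (jumpRate α β μ (x i.castSucc) (x i.succ) (b i) *
            Real.exp (-(totalRate α β μ (x i.castSucc)) * t i))

lemma factor_eq (α β μ s : ℝ) (i j : ℕ) (mark : Bool) (u : ℝ) :
    (if mark then s else 1) *
      (jumpRate α β μ i j mark * Real.exp (-(totalRate α β μ i) * u)) =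
    Real.exp ((s - 1) * μ * ((i : ℝ) * u)) *
      (jumpRate α β (s * μ) i j mark * Real.exp (-(totalRate α β (s * μ) i) * u)) := by
  have hexp : Real.exp ((s - 1) * μ * ((i : ℝ) * u)) *
      Real.exp (-(totalRate α β (s * μ) i) * u) =
      Real.exp (-(totalRate α β μ i) * u) := by
    rw [← Real.exp_add]; congr 1; simp only [totalRate]; ring
  cases mark with
  | false =>
    simp only [jumpRate, if_false, Bool.false_eq_true]
    rw [← hexp]; ring
  | true =>
    simp only [jumpRate, if_true]
    split_ifs with h
    · rw [← hexp]; ring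
    · simp

/-- change of measure for mutation counts.  For every `s > 0` and
every nonnegative measurable functional `f` of the (unmarked) trajectory,
`E_μ[f(X) s^M] = E_{sμ}[f(X) e^{(s-1)μL}]`, where `M` is the number of
mutation transitions and `L = ∫ X_t dt = ∑ x_k t_k`. -/
theorem mutation_change_of_measure (α β μ s : ℝ)
    (hα : 0 < α) (hβ : 0 < β) (hμ : 0 < μ) (hs : 0 < s)
    (f : (n : ℕ) → (Fin (n + 1) → ℕ) → (Fin n → ℝ) → ℝ)
    (hfnn : ∀ n x t, 0 ≤ f n x t)
    (hfmeas : ∀ n x, Measurable (f n x)) :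
    pathExpectation α β μ (fun n x b t =>
        f n x t * s ^ (Finset.univ.filter (fun i : Fin n => b i = true)).card)
      = pathExpectation α β (s * μ) (fun n x _b t =>
        f n x t * Real.exp ((s - 1) * μ * ∑ i : Fin n, ((x i.castSucc : ℝ) * t i))) := by
  refine tsum_congr fun n => tsum_congr fun x => tsum_congr fun b => ?_
  refine integral_congr_ae (Filter.Eventually.of_forall fun t => ?_)
  simp only
  rw [show (s ^ (Finset.univ.filter fun i : Fin n => b i = true).card)
        = ∏ i : Fin n, (if b i = true then s else 1) by
      rw [← Finset.prod_const, Finset.prod_filter],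
    show Real.exp ((s - 1) * μ * ∑ i : Fin n, ((x i.castSucc : ℝ) * t i))
        = ∏ i : Fin n, Real.exp ((s - 1) * μ * ((x i.castSucc : ℝ) * t i)) by
      rw [← Real.exp_sum, Finset.mul_sum]]
  rw [show ∀ (I F A C : ℝ), I * (F * A) * C = (I * F) * (A * C) from fun _ _ _ _ => by ring,
    show ∀ (I F A C : ℝ), I * (F * A) * C = (I * F) * (A * C) from fun _ _ _ _ => by ring,
    ← Finset.prod_mul_distrib, ← Finset.prod_mul_distrib]
  congr 1
  exact Finset.prod_congr rfl fun i _ => factor_eq α β μ s _ _ _ _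
end
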